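/- For every integer n ≥ 2, the set of admissible configurations of size n (i.e., interlaced collections of pairwise disjoint chains of positive integers with n entries in total and smallest entry equal to 1) is finite and has exactly 2^(n−2) elements. -/

import Mathlib

/-- The maximum entry of a finite set of integers (`0` for the empty set). -/
def fmax (C : Finset ℤ) : ℤ := WithBot.unbotD 0 C.max

/-- The minimum entry of a finite set of integers (`0` for the empty set). -/
def fmin (C : Finset ℤ) : ℤ := WithTop.untopD 0 C.min

/-- A *chain* is a nonempty set of integers of the form `{c, c-2, …, c-2k}`. -/
def IsChainSet (C : Finset ℤ) : Prop :=
  ∃ (c : ℤ) (k : ℕ), C = (Finset.range (k + 1)).image (fun i : ℕ => c - 2 * (i : ℤ))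

/-- Two chains with disjoint entries, with maxima `A, B` and minima `a, b`, are *linked*
if `A > B > a` or `B > A > b`. -/
def LinkedChains (C D : Finset ℤ) : Prop :=
  Disjoint C D ∧
    ((fmax D < fmax C ∧ fmin C < fmax D) ∨ (fmax C < fmax D ∧ fmin D < fmax C))

/-- The set of all entries of a collection of chains. -/
def entriesOf (S : Finset (Finset ℤ)) : Finset ℤ := S.biUnion id

/-- A finite collection of pairwise disjoint chains. -/
def IsChainCollection (S : Finset (Finset ℤ)) : Prop :=
  (∀ C ∈ S, IsChainSet C) ∧ ∀ C ∈ S, ∀ D ∈ S, C ≠ D → Disjoint C D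

/-- A collection of pairwise disjoint chains is *interlaced* if any two of its chains are
joined by a finite sequence of chains of the collection in which consecutive chains are
linked. -/
def Interlaced (S : Finset (Finset ℤ)) : Prop :=
  ∀ C ∈ S, ∀ D ∈ S,
    Relation.ReflTransGen (fun X Y => X ∈ S ∧ Y ∈ S ∧ LinkedChains X Y) C D

/-- An *admissible configuration of size `n`*: an interlaced collection of pairwise disjoint
chains of positive integers with `n` entries in total and smallest entry equal to `1`. -/
def AdmissibleConfig (n : ℕ) (S : Finset (Finset ℤ)) : Prop :=
  IsChainCollection S ∧ Interlaced S ∧ (entriesOf S).card = n ∧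
    (∀ x ∈ entriesOf S, 0 < x) ∧ (1 : ℤ) ∈ entriesOf S

def chainSet (c : ℤ) (k : ℕ) : Finset ℤ :=
  (Finset.range (k + 1)).image (fun i : ℕ => c - 2 * (i : ℤ))

lemma mem_chainSet {c : ℤ} {k : ℕ} {x : ℤ} :
    x ∈ chainSet c k ↔ c - 2 * k ≤ x ∧ x ≤ c ∧ 2 ∣ c - x := by
  simp only [chainSet, Finset.mem_image, Finset.mem_range]
  constructor
  · rintro ⟨i, hi, rfl⟩
    have : (i : ℤ) ≤ k := by exact_mod_cast Nat.lt_succ_iff.mp hi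
    exact ⟨by linarith, by linarith [Int.ofNat_nonneg i], ⟨i, by ring⟩⟩
  · rintro ⟨h1, h2, m, hm⟩
    refine ⟨m.toNat, ?_, ?_⟩ <;> omega

lemma chainSet_nonempty (c : ℤ) (k : ℕ) : (chainSet c k).Nonempty :=
  ⟨c, mem_chainSet.mpr ⟨by omega, le_refl c, ⟨0, by ring⟩⟩⟩

lemma fmax_eq {C : Finset ℤ} {a : ℤ} (h1 : a ∈ C) (h2 : ∀ x ∈ C, x ≤ a) : fmax C = a := by
  have : C.max = a := le_antisymm (Finset.max_le (by simpa using h2)) (Finset.le_max h1)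
  simp [fmax, this]

lemma fmin_eq {C : Finset ℤ} {a : ℤ} (h1 : a ∈ C) (h2 : ∀ x ∈ C, a ≤ x) : fmin C = a := by
  have : C.min = a := le_antisymm (Finset.min_le h1) (Finset.le_min (by simpa using h2))
  simp [fmin, this]

lemma fmax_mem {C : Finset ℤ} (h : C.Nonempty) : fmax C ∈ C := by
  obtain ⟨a, ha⟩ := Finset.max_of_nonempty h
  have := Finset.mem_of_max ha
  simpa [fmax, ha] using this

lemma le_fmax {C : Finset ℤ} {x : ℤ} (h : x ∈ C) : x ≤ fmax C := by
  have h' : C.Nonempty := ⟨x, h⟩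
  obtain ⟨a, ha⟩ := Finset.max_of_nonempty h'
  have := Finset.le_max_of_eq h ha
  simpa [fmax, ha] using this

lemma fmin_mem {C : Finset ℤ} (h : C.Nonempty) : fmin C ∈ C := by
  obtain ⟨a, ha⟩ := Finset.min_of_nonempty h
  have := Finset.mem_of_min ha
  simpa [fmin, ha] using this

lemma fmin_le {C : Finset ℤ} {x : ℤ} (h : x ∈ C) : fmin C ≤ x := by
  have h' : C.Nonempty := ⟨x, h⟩
  obtain ⟨a, ha⟩ := Finset.min_of_nonempty h'
  have := Finset.min_le_of_eq h ha
  simpa [fmin, ha] using this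

lemma fmax_chainSet (c : ℤ) (k : ℕ) : fmax (chainSet c k) = c :=
  fmax_eq (mem_chainSet.mpr ⟨by omega, le_refl c, ⟨0, by ring⟩⟩)
    (fun x hx => (mem_chainSet.mp hx).2.1)

lemma fmin_chainSet (c : ℤ) (k : ℕ) : fmin (chainSet c k) = c - 2 * k :=
  fmin_eq (mem_chainSet.mpr ⟨le_refl _, by omega, ⟨k, by ring⟩⟩)
    (fun x hx => (mem_chainSet.mp hx).1)

lemma card_chainSet (c : ℤ) (k : ℕ) : (chainSet c k).card = k + 1 := by
  rw [chainSet, Finset.card_image_of_injective _ (fun i j hij => by omega), Finset.card_range]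

lemma insert_chainSet (c : ℤ) (k : ℕ) : insert (c + 2) (chainSet c k) = chainSet (c + 2) (k + 1) := by
  ext x
  simp only [Finset.mem_insert, mem_chainSet]
  omega

lemma erase_chainSet (c : ℤ) (k : ℕ) : (chainSet c (k + 1)).erase c = chainSet (c - 2) k := by
  ext x
  simp only [Finset.mem_erase, mem_chainSet]
  omega

lemma chainSet_zero (c : ℤ) : chainSet c 0 = {c} := by
  ext x; simp only [mem_chainSet, Finset.mem_singleton]; omega

lemma isChainSet_iff {C : Finset ℤ} : IsChainSet C ↔ ∃ c k, C = chainSet c k := Iff.rfl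

-- entriesOf
lemma mem_entriesOf {S : Finset (Finset ℤ)} {x : ℤ} :
    x ∈ entriesOf S ↔ ∃ C ∈ S, x ∈ C := by
  simp [entriesOf]

lemma subset_entriesOf {S : Finset (Finset ℤ)} {C : Finset ℤ} (h : C ∈ S) :
    C ⊆ entriesOf S := fun x hx => mem_entriesOf.mpr ⟨C, h, hx⟩

lemma linked_symm {C D : Finset ℤ} (h : LinkedChains C D) : LinkedChains D C := by
  obtain ⟨hd, h1 | h2⟩ := h
  · exact ⟨hd.symm, Or.inr h1⟩
  · exact ⟨hd.symm, Or.inl h2⟩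

-- transport of Interlaced along a map
lemma interlaced_map {S T : Finset (Finset ℤ)} (f : Finset ℤ → Finset ℤ)
    (hmem : ∀ C ∈ S, f C ∈ T) (hsurj : ∀ D ∈ T, ∃ C ∈ S, f C = D)
    (hlink : ∀ C ∈ S, ∀ D ∈ S, LinkedChains C D → LinkedChains (f C) (f D))
    (hS : Interlaced S) : Interlaced T := by
  intro C hC D hD
  obtain ⟨C', hC', rfl⟩ := hsurj C hC
  obtain ⟨D', hD', rfl⟩ := hsurj D hD
  refine Relation.ReflTransGen.lift f ?_ _ _ (hS C' hC' D' hD')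
  rintro a b ⟨ha, hb, hab⟩
  exact ⟨hmem a ha, hmem b hb, hlink a ha b hb hab⟩

-- adding a leaf
lemma interlaced_insert {S : Finset (Finset ℤ)} {D0 C0 : Finset ℤ}
    (hC0 : C0 ∈ S) (hlink : LinkedChains D0 C0) (hS : Interlaced S) :
    Interlaced (insert D0 S) := by
  have hedge : ∀ X Y, (X ∈ S ∧ Y ∈ S ∧ LinkedChains X Y) →
      (X ∈ insert D0 S ∧ Y ∈ insert D0 S ∧ LinkedChains X Y) := by
    rintro X Y ⟨h1, h2, h3⟩
    exact ⟨Finset.mem_insert_of_mem h1, Finset.mem_insert_of_mem h2, h3⟩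
  have hpath : ∀ X ∈ S, ∀ Y ∈ S,
      Relation.ReflTransGen (fun X Y => X ∈ insert D0 S ∧ Y ∈ insert D0 S ∧ LinkedChains X Y) X Y :=
    fun X hX Y hY => Relation.ReflTransGen.mono hedge _ _ (hS X hX Y hY)
  intro C hC D hD
  by_cases hC1 : C = D0 <;> by_cases hD1 : D = D0
  · rw [hC1, hD1]
  · have hD2 : D ∈ S := (Finset.mem_insert.mp hD).resolve_left hD1
    rw [hC1]
    exact Relation.ReflTransGen.head
      ⟨Finset.mem_insert_self _ _, Finset.mem_insert_of_mem hC0, hlink⟩ (hpath C0 hC0 D hD2)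
  · have hC2 : C ∈ S := (Finset.mem_insert.mp hC).resolve_left hC1
    rw [hD1]
    exact Relation.ReflTransGen.tail (hpath C hC2 C0 hC0)
      ⟨Finset.mem_insert_of_mem hC0, Finset.mem_insert_self _ _, linked_symm hlink⟩
  · exact hpath C ((Finset.mem_insert.mp hC).resolve_left hC1)
      D ((Finset.mem_insert.mp hD).resolve_left hD1)

-- removing a leaf
lemma interlaced_erase {S : Finset (Finset ℤ)} {D0 C0 : Finset ℤ}
    (hC0 : C0 ∈ S) (hne : C0 ≠ D0)
    (hleaf : ∀ X ∈ S, LinkedChains D0 X → X = C0)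
    (hS : Interlaced S) : Interlaced (S.erase D0) := by
  set g : Finset ℤ → Finset ℤ := fun X => if X = D0 then C0 else X with hg
  have key : ∀ X Y, (X ∈ S ∧ Y ∈ S ∧ LinkedChains X Y) →
      Relation.ReflTransGen
        (fun X Y => X ∈ S.erase D0 ∧ Y ∈ S.erase D0 ∧ LinkedChains X Y) (g X) (g Y) := by
    rintro X Y ⟨hX, hY, hXY⟩
    by_cases h1 : X = D0
    · by_cases h2 : Y = D0
      · rw [h1, h2]
      · have hY2 : Y = C0 := by
          refine hleaf Y hY ?_
          rw [← h1]; exact hXY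
        rw [hY2]
        simp only [hg, if_pos h1, if_neg (hY2 ▸ h2 : C0 ≠ D0)]
        exact Relation.ReflTransGen.refl
    · by_cases h2 : Y = D0
      · have hX2 : X = C0 := by
          refine hleaf X hX ?_
          rw [← h2]; exact linked_symm hXY
        rw [hX2]
        simp only [hg, if_pos h2, if_neg (hX2 ▸ h1 : C0 ≠ D0)]
        exact Relation.ReflTransGen.refl
      · simp only [hg, if_neg h1, if_neg h2]
        exact Relation.ReflTransGen.single ⟨Finset.mem_erase.mpr ⟨h1, hX⟩,
          Finset.mem_erase.mpr ⟨h2, hY⟩, hXY⟩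
  intro C hC D hD
  have hC' := Finset.mem_erase.mp hC
  have hD' := Finset.mem_erase.mp hD
  have := Relation.ReflTransGen.lift' (f := g) key _ _ (hS C hC'.2 D hD'.2)
  simpa [hg, if_neg hC'.1, if_neg hD'.1, Function.onFun] using this

lemma chain_canon {C : Finset ℤ} (h : IsChainSet C) :
    ∃ k, C = chainSet (fmax C) k := by
  obtain ⟨c, k, rfl⟩ := h
  exact ⟨k, by rw [show ((Finset.range (k+1)).image (fun i : ℕ => c - 2 * (i:ℤ))) = chainSet c k from rfl, fmax_chainSet]⟩

lemma chain_canon' {C : Finset ℤ} (h : IsChainSet C) :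
    ∃ k, C = chainSet (fmax C) k ∧ fmin C = fmax C - 2 * k := by
  obtain ⟨k, hk⟩ := chain_canon h
  exact ⟨k, hk, by rw [hk, fmin_chainSet, fmax_chainSet]⟩

lemma chain_nonempty {C : Finset ℤ} (h : IsChainSet C) : C.Nonempty := by
  obtain ⟨c, k, rfl⟩ := h
  exact chainSet_nonempty c k

lemma chain_two_dvd {C : Finset ℤ} (h : IsChainSet C) {x y : ℤ}
    (hx : x ∈ C) (hy : y ∈ C) : 2 ∣ x - y := by
  obtain ⟨c, k, hck⟩ := isChainSet_iff.mp h
  subst hck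
  have h1 := (mem_chainSet.mp hx).2.2
  have h2 := (mem_chainSet.mp hy).2.2
  omega

def topVal (S : Finset (Finset ℤ)) : ℤ := fmax (entriesOf S)

section AdmFacts

variable {n : ℕ} {S : Finset (Finset ℤ)}

lemma adm_entries_nonempty (h : AdmissibleConfig n S) : (entriesOf S).Nonempty :=
  ⟨1, h.2.2.2.2⟩

lemma adm_topVal_mem (h : AdmissibleConfig n S) : topVal S ∈ entriesOf S :=
  fmax_mem (adm_entries_nonempty h)

lemma le_topVal {x : ℤ} (hx : x ∈ entriesOf S) : x ≤ topVal S := le_fmax hx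

lemma adm_chain_unique (h : AdmissibleConfig n S) {C D : Finset ℤ} {x : ℤ}
    (hC : C ∈ S) (hD : D ∈ S) (hxC : x ∈ C) (hxD : x ∈ D) : C = D := by
  by_contra hne
  exact Finset.disjoint_left.mp (h.1.2 C hC D hD hne) hxC hxD

lemma adm_top_chain (h : AdmissibleConfig n S) :
    ∃ C0 ∈ S, topVal S ∈ C0 ∧ fmax C0 = topVal S := by
  obtain ⟨C0, hC0, hmem⟩ := mem_entriesOf.mp (adm_topVal_mem h)
  refine ⟨C0, hC0, hmem, le_antisymm ?_ (le_fmax hmem)⟩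
  exact le_topVal (subset_entriesOf hC0 (fmax_mem ⟨_, hmem⟩))

lemma adm_fmax_le (h : AdmissibleConfig n S) {C : Finset ℤ} (hC : C ∈ S) :
    fmax C ≤ topVal S :=
  le_topVal (subset_entriesOf hC (fmax_mem (chain_nonempty (h.1.1 C hC))))

lemma adm_fmin_pos (h : AdmissibleConfig n S) {C : Finset ℤ} (hC : C ∈ S) :
    0 < fmin C :=
  h.2.2.2.1 _ (subset_entriesOf hC (fmin_mem (chain_nonempty (h.1.1 C hC))))

/-- The chain containing the top value is linked to nothing if it is a singleton;
hence if another chain exists, it is not a singleton. -/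
lemma adm_top_fmin_lt (h : AdmissibleConfig n S) {C0 D : Finset ℤ}
    (hC0 : C0 ∈ S) (hmem : topVal S ∈ C0) (hD : D ∈ S) (hne : D ≠ C0) :
    fmin C0 < topVal S := by
  by_contra hlt
  push_neg at hlt
  have hfmax : fmax C0 = topVal S :=
    le_antisymm (adm_fmax_le h hC0) (le_fmax hmem)
  have hfmin : fmin C0 = topVal S :=
    le_antisymm ((fmin_le hmem).trans (le_fmax hmem) |>.trans hfmax.le) hlt
  have hnolink : ∀ X, ¬ LinkedChains C0 X ∨ X ∉ S := by
    intro X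
    by_cases hX : X ∈ S
    · left
      rintro ⟨-, ⟨h1, h2⟩ | ⟨h1, h2⟩⟩
      · rw [hfmin] at h2; rw [hfmax] at h1; omega
      · rw [hfmax] at h1
        exact absurd (adm_fmax_le h hX) (by omega)
    · right; exact hX
  have hpath := h.2.1 C0 hC0 D hD
  rcases Relation.ReflTransGen.cases_head hpath with rfl | ⟨c, ⟨-, hcS, hlink⟩, -⟩
  · exact hne rfl
  · rcases hnolink c with hn1 | hn2
    · exact hn1 hlink
    · exact hn2 hcS

end AdmFacts

def ext (S : Finset (Finset ℤ)) (v w : ℤ) : Finset (Finset ℤ) :=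
  S.image (fun C => if v ∈ C then insert w C else C)

def del (S : Finset (Finset ℤ)) (v : ℤ) : Finset (Finset ℤ) :=
  (S.image (fun C => C.erase v)).erase ∅

def op0 (S : Finset (Finset ℤ)) : Finset (Finset ℤ) := ext S (topVal S) (topVal S + 2)

def op1 (S : Finset (Finset ℤ)) : Finset (Finset ℤ) :=
  if (topVal S - 1) ∈ entriesOf S then ext S (topVal S - 1) (topVal S + 1)
  else insert {topVal S - 1} S

def psi (S : Finset (Finset ℤ)) : Finset (Finset ℤ) :=
  if ({topVal S - 1} : Finset ℤ) ∈ S then S.erase {topVal S - 1} else del S (topVal S)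

lemma image_update {S : Finset (Finset ℤ)} {C0 A : Finset ℤ} (hC0 : C0 ∈ S) :
    S.image (fun C => if C = C0 then A else C) = insert A (S.erase C0) := by
  ext Y
  simp only [Finset.mem_image, Finset.mem_insert, Finset.mem_erase]
  constructor
  · rintro ⟨C, hC, rfl⟩
    by_cases h : C = C0
    · simp [h]
    · simp [h, hC]
  · rintro (rfl | ⟨h1, h2⟩)
    · exact ⟨C0, hC0, by simp⟩
    · exact ⟨Y, h2, by simp [h1]⟩

lemma ext_eq {S : Finset (Finset ℤ)} {C0 : Finset ℤ} {v w : ℤ}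
    (hC0 : C0 ∈ S) (hv : v ∈ C0) (huniq : ∀ D ∈ S, v ∈ D → D = C0) :
    ext S v w = insert (insert w C0) (S.erase C0) := by
  rw [ext, show S.image (fun C => if v ∈ C then insert w C else C)
      = S.image (fun C => if C = C0 then insert w C0 else C) from
    Finset.image_congr (fun C hC => by
      by_cases h : v ∈ C
      · rw [if_pos h, if_pos (huniq C hC h), huniq C hC h]
      · rw [if_neg h, if_neg (fun hcc : C = C0 => h (hcc ▸ hv))]),
    image_update hC0]

lemma del_eq {S : Finset (Finset ℤ)} {C0 : Finset ℤ} {v : ℤ}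
    (hC0 : C0 ∈ S) (hv : v ∈ C0) (huniq : ∀ D ∈ S, v ∈ D → D = C0)
    (hnonempty : ∀ D ∈ S, D.Nonempty) (hC0v : (C0.erase v).Nonempty) :
    del S v = insert (C0.erase v) (S.erase C0) := by
  rw [del, show S.image (fun C => C.erase v)
      = S.image (fun C => if C = C0 then C0.erase v else C) from
    Finset.image_congr (fun C hC => by
      by_cases h : C = C0
      · rw [if_pos h, h]
      · rw [if_neg h, Finset.erase_eq_of_notMem (fun hvC => h (huniq C hC hvC))]),
    image_update hC0]
  apply Finset.erase_eq_of_notMem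
  simp only [Finset.mem_insert, Finset.mem_erase]
  rintro (h | ⟨-, h⟩)
  · exact hC0v.ne_empty h.symm
  · exact (hnonempty _ h).ne_empty rfl

lemma entriesOf_insert (C : Finset ℤ) (S : Finset (Finset ℤ)) :
    entriesOf (insert C S) = C ∪ entriesOf S := by
  simp [entriesOf]

lemma entriesOf_erase {S : Finset (Finset ℤ)} {C : Finset ℤ}
    (hdisj : ∀ C' ∈ S, ∀ D ∈ S, C' ≠ D → Disjoint C' D) (hC : C ∈ S) :
    entriesOf (S.erase C) = entriesOf S \ C := by
  ext x
  simp only [mem_entriesOf, Finset.mem_sdiff, Finset.mem_erase]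
  constructor
  · rintro ⟨D, ⟨hne, hD⟩, hx⟩
    exact ⟨⟨D, hD, hx⟩, fun hxC => Finset.disjoint_left.mp (hdisj D hD C hC hne) hx hxC⟩
  · rintro ⟨⟨D, hD, hx⟩, hxC⟩
    exact ⟨D, ⟨fun h => hxC (h ▸ hx), hD⟩, hx⟩

lemma interlaced_update {S : Finset (Finset ℤ)} {C0 C0' : Finset ℤ}
    (hC0 : C0 ∈ S) (hS : Interlaced S) (hC0ne : C0.Nonempty)
    (hlink : ∀ D ∈ S, LinkedChains C0 D → LinkedChains C0' D) :
    Interlaced (insert C0' (S.erase C0)) := by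
  refine interlaced_map (fun C => if C = C0 then C0' else C) ?_ ?_ ?_ hS
  · intro C hC
    by_cases h : C = C0
    · simp [h]
    · simp [h, Finset.mem_insert, Finset.mem_erase, hC]
  · intro D hD
    rcases Finset.mem_insert.mp hD with rfl | hD'
    · exact ⟨C0, hC0, by simp⟩
    · obtain ⟨h1, h2⟩ := Finset.mem_erase.mp hD'
      exact ⟨D, h2, by simp [h1]⟩
  · intro C hC D hD hlk
    have hCD : C ≠ D := by
      rintro rfl
      rcases hlk.2 with ⟨h1, h2⟩ | ⟨h1, h2⟩ <;> omega
    by_cases h1 : C = C0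
    · by_cases h2 : D = C0
      · exact absurd (h1.trans h2.symm) hCD
      · rw [if_pos h1, if_neg h2]
        exact hlink D hD (h1 ▸ hlk)
    · by_cases h2 : D = C0
      · rw [if_pos h2, if_neg h1]
        exact linked_symm (hlink C hC (linked_symm (h2 ▸ hlk)))
      · rw [if_neg h1, if_neg h2]
        exact hlk

section Main

variable {n : ℕ} {S : Finset (Finset ℤ)}

lemma adm_card_le (h : AdmissibleConfig n S) : (n : ℤ) ≤ topVal S := by
  have hsub : entriesOf S ⊆ Finset.Icc 1 (topVal S) := by
    intro x hx
    exact Finset.mem_Icc.mpr ⟨h.2.2.2.1 x hx, le_topVal hx⟩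
  have h2 := Finset.card_le_card hsub
  rw [h.2.2.1, Int.card_Icc] at h2
  have h1 : (1 : ℤ) ≤ topVal S := le_topVal h.2.2.2.2
  omega

lemma adm_topVal_ge (hn : 2 ≤ n) (h : AdmissibleConfig n S) : 3 ≤ topVal S := by
  have h2 : (2 : ℤ) ≤ topVal S := le_trans (by exact_mod_cast hn) (adm_card_le h)
  by_contra hlt
  have hN : topVal S = 2 := by omega
  obtain ⟨C0, hC0, hmem, hfmax⟩ := adm_top_chain h
  obtain ⟨D, hD, hD1⟩ := mem_entriesOf.mp h.2.2.2.2
  have h1C0 : (1 : ℤ) ∉ C0 := by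
    intro h1
    have := chain_two_dvd (h.1.1 C0 hC0) hmem h1
    omega
  have hDC0 : D ≠ C0 := fun hDC => h1C0 (hDC ▸ hD1)
  have hfm := adm_top_fmin_lt h hC0 hmem hD hDC0
  have hfm2 := chain_two_dvd (h.1.1 C0 hC0) hmem (fmin_mem ⟨_, hmem⟩)
  have hfm3 := adm_fmin_pos h hC0
  omega

lemma adm_top_fmin_le (hn : 2 ≤ n) (h : AdmissibleConfig n S) {C0 : Finset ℤ}
    (hC0 : C0 ∈ S) (hmem : topVal S ∈ C0) : fmin C0 ≤ topVal S - 2 := by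
  have hN3 := adm_topVal_ge hn h
  have hdvd := chain_two_dvd (h.1.1 C0 hC0) hmem (fmin_mem ⟨_, hmem⟩)
  by_cases hex : ∃ D ∈ S, D ≠ C0
  · obtain ⟨D, hD, hne⟩ := hex
    have := adm_top_fmin_lt h hC0 hmem hD hne
    omega
  · push_neg at hex
    obtain ⟨D, hD, hD1⟩ := mem_entriesOf.mp h.2.2.2.2
    have h1 : (1 : ℤ) ∈ C0 := hex D hD ▸ hD1
    have := fmin_le h1
    omega

lemma self_mem_chainSet (c : ℤ) (k : ℕ) : c ∈ chainSet c k :=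
  mem_chainSet.mpr ⟨by omega, le_refl c, ⟨0, by ring⟩⟩

lemma op0_spec (h : AdmissibleConfig n S) :
    ∃ (C0 : Finset ℤ) (k : ℕ), C0 ∈ S ∧ C0 = chainSet (topVal S) k ∧
      op0 S = insert (chainSet (topVal S + 2) (k + 1)) (S.erase C0) := by
  obtain ⟨C0, hC0, hmem, hfmax⟩ := adm_top_chain h
  obtain ⟨k, hk⟩ := chain_canon (h.1.1 C0 hC0)
  rw [hfmax] at hk
  refine ⟨C0, k, hC0, hk, ?_⟩
  rw [op0, ext_eq hC0 hmem (fun D hD hND => adm_chain_unique h hD hC0 hND hmem),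
    ← insert_chainSet, ← hk]

lemma adm_op0 (hn : 2 ≤ n) (h : AdmissibleConfig n S) :
    AdmissibleConfig (n + 1) (op0 S) ∧ psi (op0 S) = S ∧
      (topVal (op0 S) - 1) ∉ entriesOf (op0 S) := by
  have hN3 := adm_topVal_ge hn h
  obtain ⟨C0, k, hC0, hCk, hop⟩ := op0_spec h
  set N := topVal S with hNdef
  have hmem : N ∈ C0 := hCk ▸ self_mem_chainSet N k
  have hfmaxC0 : fmax C0 = N := by rw [hCk, fmax_chainSet]
  have hfresh : N + 2 ∉ entriesOf S := fun hx => by have := le_topVal hx; omega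
  have hfresh1 : N + 1 ∉ entriesOf S := fun hx => by have := le_topVal hx; omega
  have hC0sub : C0 ⊆ entriesOf S := subset_entriesOf hC0
  set C0' : Finset ℤ := chainSet (N + 2) (k + 1) with hC0'def
  have hC0'mem : N + 2 ∈ C0' := self_mem_chainSet _ _
  have hC0'ins : C0' = insert (N + 2) C0 := by rw [hCk, insert_chainSet]
  have hC0'notS : ∀ D ∈ S, C0' ≠ D := by
    intro D hD hne
    exact hfresh (subset_entriesOf hD (hne ▸ hC0'mem))
  have h_ent : entriesOf (op0 S) = insert (N + 2) (entriesOf S) := by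
    rw [hop, entriesOf_insert, entriesOf_erase h.1.2 hC0, hC0'ins,
      Finset.insert_union, Finset.union_sdiff_of_subset hC0sub]
  have h_top : topVal (op0 S) = N + 2 := by
    rw [topVal, h_ent]
    refine fmax_eq (Finset.mem_insert_self _ _) ?_
    intro x hx
    rcases Finset.mem_insert.mp hx with rfl | hx
    · exact le_refl _
    · have := le_topVal hx; omega
  have hdisj' : ∀ D ∈ S, D ≠ C0 → Disjoint C0' D := by
    intro D hD hne
    rw [hC0'ins, Finset.disjoint_left]
    intro x hx hxD
    rcases Finset.mem_insert.mp hx with rfl | hx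
    · exact hfresh (subset_entriesOf hD hxD)
    · exact Finset.disjoint_left.mp (h.1.2 C0 hC0 D hD (Ne.symm hne)) hx hxD
  have hadm : AdmissibleConfig (n + 1) (op0 S) := by
    refine ⟨⟨?_, ?_⟩, ?_, ?_, ?_, ?_⟩
    · intro D hD
      rw [hop] at hD
      rcases Finset.mem_insert.mp hD with rfl | hD
      · exact ⟨N + 2, k + 1, rfl⟩
      · exact h.1.1 D (Finset.mem_erase.mp hD).2
    · intro C hC D hD hne
      rw [hop] at hC hD
      rcases Finset.mem_insert.mp hC with rfl | hC <;>
        rcases Finset.mem_insert.mp hD with rfl | hD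
      · exact absurd rfl hne
      · obtain ⟨hD1, hD2⟩ := Finset.mem_erase.mp hD
        exact hdisj' D hD2 hD1
      · obtain ⟨hC1, hC2⟩ := Finset.mem_erase.mp hC
        exact (hdisj' C hC2 hC1).symm
      · obtain ⟨hC1, hC2⟩ := Finset.mem_erase.mp hC
        obtain ⟨hD1, hD2⟩ := Finset.mem_erase.mp hD
        exact h.1.2 C hC2 D hD2 hne
    · rw [hop]
      refine interlaced_update hC0 h.2.1 ⟨_, hmem⟩ ?_
      rintro D hD ⟨hdisj, hcase⟩
      have hDdisj : Disjoint C0' D := by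
        rw [hC0'ins, Finset.disjoint_left]
        intro x hx hxD
        rcases Finset.mem_insert.mp hx with rfl | hx
        · exact hfresh (subset_entriesOf hD hxD)
        · exact Finset.disjoint_left.mp hdisj hx hxD
      refine ⟨hDdisj, ?_⟩
      rcases hcase with ⟨h1, h2⟩ | ⟨h1, h2⟩
      · left
        have e1 : fmax C0' = N + 2 := by rw [hC0'def, fmax_chainSet]
        have e2 : fmin C0' = N + 2 - 2 * (k + 1 : ℕ) := by rw [hC0'def, fmin_chainSet]
        have e3 : fmin C0 = N - 2 * (k : ℕ) := by rw [hCk, fmin_chainSet]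
        rw [hfmaxC0] at h1
        push_cast at e2
        constructor <;> omega
      · rw [hfmaxC0] at h1
        have := adm_fmax_le h hD
        omega
    · rw [h_ent, Finset.card_insert_of_notMem hfresh, h.2.2.1]
    · intro x hx
      rw [h_ent] at hx
      rcases Finset.mem_insert.mp hx with rfl | hx
      · omega
      · exact h.2.2.2.1 x hx
    · rw [h_ent]
      exact Finset.mem_insert_of_mem h.2.2.2.2
  have e : topVal (op0 S) - 1 = N + 1 := by rw [h_top]; ring
  have hsingle : ({N + 1} : Finset ℤ) ∉ op0 S := by
    rw [hop]
    intro hmem'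
    rcases Finset.mem_insert.mp hmem' with heq | hmem'
    · have h2 : N + 2 ∈ ({N + 1} : Finset ℤ) := by rw [heq]; exact hC0'mem
      rw [Finset.mem_singleton] at h2
      omega
    · exact hfresh1
        (subset_entriesOf (Finset.mem_erase.mp hmem').2 (Finset.mem_singleton_self _))
  refine ⟨hadm, ?_, ?_⟩
  · rw [psi, e, if_neg hsingle, h_top]
    have hC0'op : C0' ∈ op0 S := hop ▸ Finset.mem_insert_self _ _
    have huniq : ∀ D ∈ op0 S, N + 2 ∈ D → D = C0' := by
      intro D hD hND
      rw [hop] at hD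
      rcases Finset.mem_insert.mp hD with rfl | hD
      · rfl
      · exact absurd (subset_entriesOf (Finset.mem_erase.mp hD).2 hND) hfresh
    have hnonempty : ∀ D ∈ op0 S, D.Nonempty := by
      intro D hD
      rw [hop] at hD
      rcases Finset.mem_insert.mp hD with rfl | hD
      · exact chainSet_nonempty _ _
      · exact chain_nonempty (h.1.1 D (Finset.mem_erase.mp hD).2)
    have herase : C0'.erase (N + 2) = C0 := by
      rw [hC0'def, erase_chainSet, hCk]
      norm_num
    rw [del_eq hC0'op hC0'mem huniq hnonempty (herase ▸ ⟨_, hmem⟩), herase, hop,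
      Finset.erase_insert (fun hmem' => hC0'notS C0' (Finset.mem_erase.mp hmem').2 rfl),
      Finset.insert_erase hC0]
  · rw [e, h_ent]
    intro hx
    rcases Finset.mem_insert.mp hx with heq | hx
    · omega
    · exact hfresh1 hx

lemma fmax_singleton (a : ℤ) : fmax ({a} : Finset ℤ) = a :=
  fmax_eq (Finset.mem_singleton_self a) (fun x hx => (Finset.mem_singleton.mp hx).le)

lemma fmin_singleton (a : ℤ) : fmin ({a} : Finset ℤ) = a :=
  fmin_eq (Finset.mem_singleton_self a) (fun x hx => (Finset.mem_singleton.mp hx).ge)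

lemma adm_top_not_single (hn : 2 ≤ n) (h : AdmissibleConfig n S) :
    ({topVal S} : Finset ℤ) ∉ S := by
  intro hmem
  have hfmin : fmin ({topVal S} : Finset ℤ) = topVal S := fmin_singleton _
  have := adm_top_fmin_le hn h hmem (Finset.mem_singleton_self _)
  have := adm_topVal_ge hn h
  omega

lemma adm_op1 (hn : 2 ≤ n) (h : AdmissibleConfig n S) :
    AdmissibleConfig (n + 1) (op1 S) ∧ psi (op1 S) = S ∧
      (topVal (op1 S) - 1) ∈ entriesOf (op1 S) := by
  have hN3 := adm_topVal_ge hn h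
  set N := topVal S with hNdef
  obtain ⟨C0, hC0, hmem, hfmaxC0⟩ := adm_top_chain h
  have hfresh1 : N + 1 ∉ entriesOf S := fun hx => by have := le_topVal hx; omega
  by_cases hcase : (N - 1) ∈ entriesOf S
  · -- extend branch
    obtain ⟨D0, hD0, hD0m⟩ := mem_entriesOf.mp hcase
    have hD0C0 : D0 ≠ C0 := by
      intro heq
      have := chain_two_dvd (h.1.1 C0 hC0) hmem (heq ▸ hD0m)
      omega
    have hfmaxD0 : fmax D0 = N - 1 := by
      have h1 : fmax D0 ≤ N := adm_fmax_le h hD0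
      have h2 : N - 1 ≤ fmax D0 := le_fmax hD0m
      have h3 : fmax D0 ≠ N := by
        intro heq
        have := chain_two_dvd (h.1.1 D0 hD0) (fmax_mem ⟨_, hD0m⟩) hD0m
        omega
      omega
    obtain ⟨j, hDj⟩ := chain_canon (h.1.1 D0 hD0)
    rw [hfmaxD0] at hDj
    have hop : op1 S = insert (insert (N + 1) D0) (S.erase D0) := by
      rw [op1, if_pos hcase,
        ext_eq hD0 hD0m (fun D hD hND => adm_chain_unique h hD hD0 hND hD0m)]
    set D0' : Finset ℤ := insert (N + 1) D0 with hD0'def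
    have hD0'chain : D0' = chainSet (N + 1) (j + 1) := by
      rw [hD0'def, hDj, show N + 1 = (N - 1) + 2 by ring, insert_chainSet]
    have hD0'mem : N + 1 ∈ D0' := Finset.mem_insert_self _ _
    have hD0sub : D0 ⊆ entriesOf S := subset_entriesOf hD0
    have h_ent : entriesOf (op1 S) = insert (N + 1) (entriesOf S) := by
      rw [hop, entriesOf_insert, entriesOf_erase h.1.2 hD0, hD0'def,
        Finset.insert_union, Finset.union_sdiff_of_subset hD0sub]
    have h_top : topVal (op1 S) = N + 1 := by
      rw [topVal, h_ent]
      refine fmax_eq (Finset.mem_insert_self _ _) ?_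
      intro x hx
      rcases Finset.mem_insert.mp hx with rfl | hx
      · exact le_refl _
      · have := le_topVal hx; omega
    have hdisj' : ∀ D ∈ S, D ≠ D0 → Disjoint D0' D := by
      intro D hD hne
      rw [hD0'def, Finset.disjoint_left]
      intro x hx hxD
      rcases Finset.mem_insert.mp hx with rfl | hx
      · exact hfresh1 (subset_entriesOf hD hxD)
      · exact Finset.disjoint_left.mp (h.1.2 D0 hD0 D hD (Ne.symm hne)) hx hxD
    have hfminD0' : fmin D0' = fmin D0 := by
      have e1 : fmin D0 = (N - 1) - 2 * (j : ℕ) := by rw [hDj, fmin_chainSet]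
      have e2 : fmin D0' = (N + 1) - 2 * ((j : ℕ) + 1) := by
        rw [hD0'chain, fmin_chainSet]; push_cast; ring
      omega
    have hfmaxD0' : fmax D0' = N + 1 := by rw [hD0'chain, fmax_chainSet]
    have hadm : AdmissibleConfig (n + 1) (op1 S) := by
      refine ⟨⟨?_, ?_⟩, ?_, ?_, ?_, ?_⟩
      · intro D hD
        rw [hop] at hD
        rcases Finset.mem_insert.mp hD with rfl | hD
        · exact isChainSet_iff.mpr ⟨N + 1, j + 1, hD0'chain⟩
        · exact h.1.1 D (Finset.mem_erase.mp hD).2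
      · intro C hC D hD hne
        rw [hop] at hC hD
        rcases Finset.mem_insert.mp hC with rfl | hC <;>
          rcases Finset.mem_insert.mp hD with rfl | hD
        · exact absurd rfl hne
        · obtain ⟨hD1, hD2⟩ := Finset.mem_erase.mp hD
          exact hdisj' D hD2 hD1
        · obtain ⟨hC1, hC2⟩ := Finset.mem_erase.mp hC
          exact (hdisj' C hC2 hC1).symm
        · obtain ⟨hC1, hC2⟩ := Finset.mem_erase.mp hC
          obtain ⟨hD1, hD2⟩ := Finset.mem_erase.mp hD
          exact h.1.2 C hC2 D hD2 hne
      · rw [hop]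
        refine interlaced_update hD0 h.2.1 ⟨_, hD0m⟩ ?_
        rintro X hX ⟨hdisj, hcs⟩
        have hXdisj : Disjoint D0' X := by
          rw [hD0'def, Finset.disjoint_left]
          intro x hx hxX
          rcases Finset.mem_insert.mp hx with rfl | hx
          · exact hfresh1 (subset_entriesOf hX hxX)
          · exact Finset.disjoint_left.mp hdisj hx hxX
        refine ⟨hXdisj, Or.inl ?_⟩
        have hXle : fmax X ≤ N := adm_fmax_le h hX
        have hminle : fmin D0 ≤ fmax D0 := fmin_le (fmax_mem ⟨_, hD0m⟩)
        rcases hcs with ⟨h1, h2⟩ | ⟨h1, h2⟩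
        · rw [hfmaxD0] at h1
          rw [hfmaxD0', hfminD0']
          omega
        · rw [hfmaxD0] at h1
          rw [hfmaxD0', hfminD0']
          omega
      · rw [h_ent, Finset.card_insert_of_notMem hfresh1, h.2.2.1]
      · intro x hx
        rw [h_ent] at hx
        rcases Finset.mem_insert.mp hx with rfl | hx
        · omega
        · exact h.2.2.2.1 x hx
      · rw [h_ent]
        exact Finset.mem_insert_of_mem h.2.2.2.2
    have e : topVal (op1 S) - 1 = N := by rw [h_top]; ring
    have hND0' : ({N} : Finset ℤ) ∉ op1 S := by
      rw [hop]
      intro hmem'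
      rcases Finset.mem_insert.mp hmem' with heq | hmem'
      · have h2 : N + 1 ∈ ({N} : Finset ℤ) := by rw [heq]; exact hD0'mem
        rw [Finset.mem_singleton] at h2
        omega
      · have h2 : ({N} : Finset ℤ) ∈ S := (Finset.mem_erase.mp hmem').2
        exact adm_top_not_single hn h h2
    refine ⟨hadm, ?_, ?_⟩
    · rw [psi, e, if_neg hND0', h_top]
      have hD0'op : D0' ∈ op1 S := hop ▸ Finset.mem_insert_self _ _
      have huniq : ∀ D ∈ op1 S, N + 1 ∈ D → D = D0' := by
        intro D hD hND
        rw [hop] at hD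
        rcases Finset.mem_insert.mp hD with rfl | hD
        · rfl
        · exact absurd (subset_entriesOf (Finset.mem_erase.mp hD).2 hND) hfresh1
      have hnonempty : ∀ D ∈ op1 S, D.Nonempty := by
        intro D hD
        rw [hop] at hD
        rcases Finset.mem_insert.mp hD with rfl | hD
        · exact ⟨_, hD0'mem⟩
        · exact chain_nonempty (h.1.1 D (Finset.mem_erase.mp hD).2)
      have herase : D0'.erase (N + 1) = D0 := by
        rw [hD0'chain, erase_chainSet, hDj]
        congr 1
        ring
      have hD0'notS : D0' ∉ S.erase D0 := by
        intro hmem'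
        exact hfresh1 (subset_entriesOf (Finset.mem_erase.mp hmem').2 hD0'mem)
      rw [del_eq hD0'op hD0'mem huniq hnonempty (herase ▸ ⟨_, hD0m⟩), herase, hop,
        Finset.erase_insert hD0'notS, Finset.insert_erase hD0]
    · rw [e, h_ent]
      exact Finset.mem_insert_of_mem (adm_topVal_mem h)
  · -- singleton branch
    have hop : op1 S = insert {N - 1} S := by rw [op1, if_neg hcase]
    have hnotS : ({N - 1} : Finset ℤ) ∉ S := by
      intro hmem'
      exact hcase (subset_entriesOf hmem' (Finset.mem_singleton_self _))
    have h_ent : entriesOf (op1 S) = insert (N - 1) (entriesOf S) := by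
      rw [hop, entriesOf_insert, ← Finset.insert_eq]
    have h_top : topVal (op1 S) = N := by
      rw [topVal, h_ent]
      refine fmax_eq (Finset.mem_insert_of_mem (adm_topVal_mem h)) ?_
      intro x hx
      rcases Finset.mem_insert.mp hx with rfl | hx
      · omega
      · exact le_topVal hx
    have hdisj0 : ∀ D ∈ S, Disjoint ({N - 1} : Finset ℤ) D := by
      intro D hD
      rw [Finset.disjoint_left]
      intro x hx hxD
      rw [Finset.mem_singleton] at hx
      exact hcase (hx ▸ subset_entriesOf hD hxD)
    have hlink0 : LinkedChains ({N - 1} : Finset ℤ) C0 := by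
      refine ⟨hdisj0 C0 hC0, Or.inr ?_⟩
      rw [fmax_singleton, hfmaxC0]
      have := adm_top_fmin_le hn h hC0 hmem
      omega
    have hadm : AdmissibleConfig (n + 1) (op1 S) := by
      refine ⟨⟨?_, ?_⟩, ?_, ?_, ?_, ?_⟩
      · intro D hD
        rw [hop] at hD
        rcases Finset.mem_insert.mp hD with rfl | hD
        · exact isChainSet_iff.mpr ⟨N - 1, 0, (chainSet_zero _).symm⟩
        · exact h.1.1 D hD
      · intro C hC D hD hne
        rw [hop] at hC hD
        rcases Finset.mem_insert.mp hC with rfl | hC <;>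
          rcases Finset.mem_insert.mp hD with rfl | hD
        · exact absurd rfl hne
        · exact hdisj0 D hD
        · exact (hdisj0 C hC).symm
        · exact h.1.2 C hC D hD hne
      · rw [hop]
        exact interlaced_insert hC0 hlink0 h.2.1
      · rw [h_ent, Finset.card_insert_of_notMem hcase, h.2.2.1]
      · intro x hx
        rw [h_ent] at hx
        rcases Finset.mem_insert.mp hx with rfl | hx
        · omega
        · exact h.2.2.2.1 x hx
      · rw [h_ent]
        exact Finset.mem_insert_of_mem h.2.2.2.2
    have e : topVal (op1 S) - 1 = N - 1 := by rw [h_top]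
    refine ⟨hadm, ?_, ?_⟩
    · rw [psi, e, hop, if_pos (Finset.mem_insert_self _ _), Finset.erase_insert hnotS]
    · rw [e, h_ent]
      exact Finset.mem_insert_self _ _

lemma adm_erase_top (hn : 2 ≤ n) (h : AdmissibleConfig (n + 1) S) {C0 : Finset ℤ} {k : ℕ}
    (hC0 : C0 ∈ S) (hCk : C0 = chainSet (topVal S) (k + 1))
    (hlink : ∀ D ∈ S, LinkedChains C0 D → LinkedChains (C0.erase (topVal S)) D) :
    AdmissibleConfig n (insert (C0.erase (topVal S)) (S.erase C0)) ∧
    entriesOf (insert (C0.erase (topVal S)) (S.erase C0)) = (entriesOf S).erase (topVal S) ∧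
    ext (insert (C0.erase (topVal S)) (S.erase C0)) (topVal S - 2) (topVal S) = S := by
  have hN3 := adm_topVal_ge (by omega) h
  set N := topVal S with hNdef
  have hmem : N ∈ C0 := hCk ▸ self_mem_chainSet N (k + 1)
  set C0' : Finset ℤ := C0.erase N with hC0'def
  have hC0'ch : C0' = chainSet (N - 2) k := by rw [hC0'def, hCk, erase_chainSet]
  have hC0'memN2 : N - 2 ∈ C0' := hC0'ch ▸ self_mem_chainSet (N - 2) k
  have hN2C0 : N - 2 ∈ C0 := Finset.mem_of_mem_erase hC0'memN2
  set T : Finset (Finset ℤ) := insert C0' (S.erase C0) with hTdef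
  have hC0'ne : C0'.Nonempty := ⟨_, hC0'memN2⟩
  have hC0'notS : C0' ∉ S.erase C0 := by
    intro hmem'
    obtain ⟨hne, hS'⟩ := Finset.mem_erase.mp hmem'
    exact Finset.disjoint_left.mp (h.1.2 C0' hS' C0 hC0 hne) hC0'memN2 hN2C0
  have h_ent : entriesOf T = (entriesOf S).erase N := by
    rw [hTdef, entriesOf_insert, entriesOf_erase h.1.2 hC0]
    ext x
    simp only [Finset.mem_union, Finset.mem_erase, Finset.mem_sdiff, hC0'def]
    constructor
    · rintro (⟨hxN, hxC0⟩ | ⟨hxE, hxC0⟩)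
      · exact ⟨hxN, subset_entriesOf hC0 hxC0⟩
      · refine ⟨?_, hxE⟩
        rintro rfl
        obtain ⟨D, hD, hxD⟩ := mem_entriesOf.mp hxE
        exact hxC0 (adm_chain_unique h hD hC0 hxD hmem ▸ hxD)
    · rintro ⟨hxN, hxE⟩
      by_cases hxC0 : x ∈ C0
      · exact Or.inl ⟨hxN, hxC0⟩
      · exact Or.inr ⟨hxE, hxC0⟩
  refine ⟨⟨⟨?_, ?_⟩, ?_, ?_, ?_, ?_⟩, h_ent, ?_⟩
  · intro D hD
    rcases Finset.mem_insert.mp hD with rfl | hD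
    · exact isChainSet_iff.mpr ⟨N - 2, k, hC0'ch⟩
    · exact h.1.1 D (Finset.mem_erase.mp hD).2
  · intro C hC D hD hne
    have hsub : ∀ X ∈ T, X ≠ C0' → X ∈ S ∧ X ≠ C0 := by
      intro X hX hXne
      rcases Finset.mem_insert.mp hX with rfl | hX
      · exact absurd rfl hXne
      · exact ⟨(Finset.mem_erase.mp hX).2, (Finset.mem_erase.mp hX).1⟩
    by_cases hC' : C = C0'
    · subst hC'
      obtain ⟨hDS, hDC0⟩ := hsub D hD (Ne.symm hne)
      exact Finset.disjoint_of_subset_left (Finset.erase_subset _ _)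
        (h.1.2 C0 hC0 D hDS (Ne.symm hDC0))
    · by_cases hD' : D = C0'
      · subst hD'
        obtain ⟨hCS, hCC0⟩ := hsub C hC hC'
        exact Finset.disjoint_of_subset_right (Finset.erase_subset _ _)
          (h.1.2 C hCS C0 hC0 hCC0)
      · obtain ⟨hCS, -⟩ := hsub C hC hC'
        obtain ⟨hDS, -⟩ := hsub D hD hD'
        exact h.1.2 C hCS D hDS hne
  · exact interlaced_update hC0 h.2.1 ⟨N, hmem⟩ hlink
  · rw [h_ent, Finset.card_erase_of_mem (adm_topVal_mem h), h.2.2.1]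
    omega
  · intro x hx
    rw [h_ent] at hx
    exact h.2.2.2.1 x (Finset.mem_erase.mp hx).2
  · rw [h_ent]
    exact Finset.mem_erase.mpr ⟨by omega, h.2.2.2.2⟩
  · have hC0'T : C0' ∈ T := Finset.mem_insert_self _ _
    have huniq : ∀ D ∈ T, N - 2 ∈ D → D = C0' := by
      intro D hD hND
      rcases Finset.mem_insert.mp hD with rfl | hD
      · rfl
      · obtain ⟨hne, hDS⟩ := Finset.mem_erase.mp hD
        exact absurd (adm_chain_unique h hDS hC0 hND hN2C0) hne
    rw [ext_eq hC0'T hC0'memN2 huniq]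
    have h1 : insert N C0' = C0 := by
      rw [hC0'ch, show (insert N (chainSet (N - 2) k) : Finset ℤ)
          = insert ((N - 2) + 2) (chainSet (N - 2) k) by norm_num, insert_chainSet,
        show N - 2 + 2 = N by ring, ← hCk]
    rw [h1, hTdef, Finset.erase_insert hC0'notS, Finset.insert_erase hC0]

lemma adm_surj (hn : 2 ≤ n) (h : AdmissibleConfig (n + 1) S) :
    ∃ T, AdmissibleConfig n T ∧ (S = op0 T ∨ S = op1 T) := by
  have hN3 := adm_topVal_ge (by omega : 2 ≤ n + 1) h
  set N := topVal S with hNdef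
  obtain ⟨C0, hC0, hmem, hfmaxC0⟩ := adm_top_chain h
  obtain ⟨k', hk'⟩ := chain_canon (h.1.1 C0 hC0)
  rw [hfmaxC0] at hk'
  obtain ⟨k, rfl⟩ : ∃ k, k' = k + 1 := by
    rcases k' with _ | k
    · exfalso
      rw [chainSet_zero] at hk'
      exact adm_top_not_single (by omega : 2 ≤ n + 1) h (hk' ▸ hC0)
    · exact ⟨k, rfl⟩
  have hCk : C0 = chainSet N (k + 1) := hk'
  have hN2C0 : N - 2 ∈ C0 := by
    rw [hCk]
    exact mem_chainSet.mpr ⟨by push_cast; omega, by omega, ⟨1, by ring⟩⟩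
  have hfminC0 : fmin C0 = N - 2 * ((k : ℤ) + 1) := by
    rw [hCk, fmin_chainSet]; push_cast; ring
  have herasech : C0.erase N = chainSet (N - 2) k := by rw [hCk, erase_chainSet]
  have hfmaxE : fmax (C0.erase N) = N - 2 := by rw [herasech, fmax_chainSet]
  have hfminE : fmin (C0.erase N) = N - 2 * ((k : ℤ) + 1) := by
    rw [herasech, fmin_chainSet]; push_cast; ring
  by_cases hc1 : N - 1 ∈ entriesOf S
  · obtain ⟨D0, hD0, hD0m⟩ := mem_entriesOf.mp hc1
    have hD0C0 : D0 ≠ C0 := by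
      intro heq
      have := chain_two_dvd (h.1.1 C0 hC0) hmem (heq ▸ hD0m)
      omega
    have hfmaxD0 : fmax D0 = N - 1 := by
      have h1 : fmax D0 ≤ N := adm_fmax_le h hD0
      have h2 : N - 1 ≤ fmax D0 := le_fmax hD0m
      have h3 : fmax D0 ≠ N := by
        intro heq
        have := chain_two_dvd (h.1.1 D0 hD0) (fmax_mem ⟨_, hD0m⟩) hD0m
        omega
      omega
    obtain ⟨j, hDj⟩ := chain_canon (h.1.1 D0 hD0)
    rw [hfmaxD0] at hDj
    rcases j with _ | j
    · -- D0 = {N-1} : singleton leaf case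
      rw [chainSet_zero] at hDj
      set T : Finset (Finset ℤ) := S.erase D0 with hTdef
      have h_ent : entriesOf T = (entriesOf S).erase (N - 1) := by
        rw [hTdef, entriesOf_erase h.1.2 hD0, hDj, Finset.sdiff_singleton_eq_erase]
      have hleaf : ∀ X ∈ S, LinkedChains D0 X → X = C0 := by
        rintro X hX ⟨hdisj, hcs⟩
        have e1 : fmax D0 = N - 1 := hfmaxD0
        have e2 : fmin D0 = N - 1 := by rw [hDj, fmin_singleton]
        rcases hcs with ⟨h1, h2⟩ | ⟨h1, h2⟩
        · omega
        · have h3 : fmax X ≤ N := adm_fmax_le h hX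
          have h4 : fmax X = N := by omega
          have h5 : N ∈ X := by rw [← h4]; exact fmax_mem (chain_nonempty (h.1.1 X hX))
          exact adm_chain_unique h hX hC0 h5 hmem
      have hadmT : AdmissibleConfig n T := by
        refine ⟨⟨?_, ?_⟩, ?_, ?_, ?_, ?_⟩
        · intro D hD
          exact h.1.1 D (Finset.mem_erase.mp hD).2
        · intro C hC D hD hne
          exact h.1.2 C (Finset.mem_erase.mp hC).2 D (Finset.mem_erase.mp hD).2 hne
        · exact interlaced_erase hC0 (fun heq => hD0C0 heq.symm) hleaf h.2.1
        · rw [h_ent, Finset.card_erase_of_mem hc1, h.2.2.1]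
          omega
        · intro x hx
          rw [h_ent] at hx
          exact h.2.2.2.1 x (Finset.mem_erase.mp hx).2
        · rw [h_ent]
          exact Finset.mem_erase.mpr ⟨by omega, h.2.2.2.2⟩
      have h_top : topVal T = N := by
        rw [topVal, h_ent]
        refine fmax_eq (Finset.mem_erase.mpr ⟨by omega, adm_topVal_mem h⟩) ?_
        intro x hx
        exact le_topVal (Finset.mem_erase.mp hx).2
      refine ⟨T, hadmT, Or.inr ?_⟩
      have hcond : topVal T - 1 ∉ entriesOf T := by
        rw [h_top, h_ent]
        intro hx
        exact (Finset.mem_erase.mp hx).1 rfl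
      rw [op1, if_neg hcond, h_top, ← hDj, hTdef, Finset.insert_erase hD0]
    · -- D0 has at least two elements
      have hfminD0 : fmin D0 = N - 1 - 2 * ((j : ℤ) + 1) := by
        rw [hDj, fmin_chainSet]; push_cast; ring
      have hlink : ∀ D ∈ S, LinkedChains C0 D → LinkedChains (C0.erase N) D := by
        rintro D hD ⟨hdisj, hcs⟩
        have hDC0' : D ≠ C0 := by
          rintro rfl
          exact Finset.disjoint_left.mp hdisj hmem hmem
        refine ⟨Finset.disjoint_of_subset_left (Finset.erase_subset _ _) hdisj, ?_⟩
        rcases hcs with ⟨h1, h2⟩ | ⟨h1, h2⟩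
        · rw [hfmaxC0] at h1
          by_cases hDD0 : D = D0
          · subst hDD0
            right
            rw [hfmaxE, hfmaxD0]
            omega
          · left
            have hne1 : fmax D ≠ N - 1 := by
              intro heq
              exact hDD0 (adm_chain_unique h hD hD0
                (heq ▸ fmax_mem (chain_nonempty (h.1.1 D hD))) hD0m)
            have hne2 : fmax D ≠ N - 2 := by
              intro heq
              exact Finset.disjoint_left.mp (h.1.2 C0 hC0 D hD (Ne.symm hDC0')) hN2C0
                (heq ▸ fmax_mem (chain_nonempty (h.1.1 D hD)))
            rw [hfmaxE, hfminE]
            rw [hfminC0] at h2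
            omega
        · rw [hfmaxC0] at h1
          have := adm_fmax_le h hD
          omega
      obtain ⟨hadmT, h_entT, hextT⟩ := adm_erase_top hn h hC0 hCk hlink
      set T : Finset (Finset ℤ) := insert (C0.erase N) (S.erase C0) with hTdef
      have h_top : topVal T = N - 1 := by
        rw [topVal, h_entT]
        refine fmax_eq (Finset.mem_erase.mpr ⟨by omega, hc1⟩) ?_
        intro x hx
        obtain ⟨hx1, hx2⟩ := Finset.mem_erase.mp hx
        have := le_topVal hx2
        omega
      refine ⟨T, hadmT, Or.inr ?_⟩
      have hcond : topVal T - 1 ∈ entriesOf T := by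
        rw [h_top, h_entT]
        refine Finset.mem_erase.mpr ⟨by omega, ?_⟩
        have : N - 1 - 1 = N - 2 := by ring
        rw [this]
        exact subset_entriesOf hC0 hN2C0
      rw [op1, if_pos hcond, h_top, show N - 1 - 1 = N - 2 by ring,
        show N - 1 + 1 = N by ring, hextT]
  · -- N - 1 not an entry: op0 case
    have hlink : ∀ D ∈ S, LinkedChains C0 D → LinkedChains (C0.erase N) D := by
      rintro D hD ⟨hdisj, hcs⟩
      have hDC0' : D ≠ C0 := by
        rintro rfl
        exact Finset.disjoint_left.mp hdisj hmem hmem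
      refine ⟨Finset.disjoint_of_subset_left (Finset.erase_subset _ _) hdisj, ?_⟩
      rcases hcs with ⟨h1, h2⟩ | ⟨h1, h2⟩
      · left
        have hfD : fmax D ∈ D := fmax_mem (chain_nonempty (h.1.1 D hD))
        have hne1 : fmax D ≠ N - 1 := fun heq => hc1 (heq ▸ subset_entriesOf hD hfD)
        have hne2 : fmax D ≠ N - 2 := by
          intro heq
          exact Finset.disjoint_left.mp (h.1.2 C0 hC0 D hD (Ne.symm hDC0')) hN2C0 (heq ▸ hfD)
        rw [hfmaxC0] at h1
        rw [hfmaxE, hfminE]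
        rw [hfminC0] at h2
        omega
      · rw [hfmaxC0] at h1
        have := adm_fmax_le h hD
        omega
    obtain ⟨hadmT, h_entT, hextT⟩ := adm_erase_top hn h hC0 hCk hlink
    set T : Finset (Finset ℤ) := insert (C0.erase N) (S.erase C0) with hTdef
    have h_top : topVal T = N - 2 := by
      rw [topVal, h_entT]
      refine fmax_eq (Finset.mem_erase.mpr ⟨by omega, subset_entriesOf hC0 hN2C0⟩) ?_
      intro x hx
      obtain ⟨hx1, hx2⟩ := Finset.mem_erase.mp hx
      have h3 := le_topVal hx2
      have h4 : x ≠ N - 1 := fun heq => hc1 (heq ▸ hx2)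
      omega
    refine ⟨T, hadmT, Or.inl ?_⟩
    rw [op0, h_top, show N - 2 + 2 = N by ring, hextT]

lemma chain13 : ({1, 3} : Finset ℤ) = chainSet 3 1 := by
  ext x
  simp only [Finset.mem_insert, Finset.mem_singleton, mem_chainSet]
  omega

lemma adm_two : {S : Finset (Finset ℤ) | AdmissibleConfig 2 S}
    = {({({1, 3} : Finset ℤ)} : Finset (Finset ℤ))} := by
  ext S
  simp only [Set.mem_setOf_eq, Set.mem_singleton_iff]
  constructor
  · intro h
    have hN3 := adm_topVal_ge (le_refl 2) h
    set N := topVal S with hNdef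
    obtain ⟨C0, hC0, hmem, hfmaxC0⟩ := adm_top_chain h
    have hNE : N ∈ entriesOf S := adm_topVal_mem h
    have h1E : (1 : ℤ) ∈ entriesOf S := h.2.2.2.2
    have hEeq : entriesOf S = {1, N} := by
      refine (Finset.eq_of_subset_of_card_le ?_ ?_).symm
      · intro x hx
        rcases Finset.mem_insert.mp hx with rfl | hx
        · exact h1E
        · exact Finset.mem_singleton.mp hx ▸ hNE
      · rw [h.2.2.1, Finset.card_insert_of_notMem (by simp; omega), Finset.card_singleton]
    obtain ⟨k', hk'⟩ := chain_canon (h.1.1 C0 hC0)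
    rw [hfmaxC0] at hk'
    obtain ⟨k, rfl⟩ : ∃ k, k' = k + 1 := by
      rcases k' with _ | k
      · exfalso
        rw [chainSet_zero] at hk'
        exact adm_top_not_single (le_refl 2) h (hk' ▸ hC0)
      · exact ⟨k, rfl⟩
    have hN2C0 : N - 2 ∈ C0 := by
      rw [hk']
      exact mem_chainSet.mpr ⟨by push_cast; omega, by omega, ⟨1, by ring⟩⟩
    have hN2E : N - 2 ∈ entriesOf S := subset_entriesOf hC0 hN2C0
    have hNval : N = 3 := by
      rw [hEeq] at hN2E
      simp only [Finset.mem_insert, Finset.mem_singleton] at hN2E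
      omega
    have hkval : k = 0 := by
      have hsub : C0 ⊆ entriesOf S := subset_entriesOf hC0
      have hcard : C0.card ≤ 2 := by
        rw [← h.2.2.1]
        exact Finset.card_le_card hsub
      rw [hk', card_chainSet] at hcard
      omega
    have hC0val : C0 = ({1, 3} : Finset ℤ) := by
      rw [hk', hkval, show topVal S = (3 : ℤ) from hNdef ▸ hNval, chain13]
    have hSsub : ∀ D ∈ S, D = C0 := by
      intro D hD
      by_contra hne
      have hdisj := h.1.2 D hD C0 hC0 hne
      obtain ⟨x, hx⟩ := chain_nonempty (h.1.1 D hD)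
      have hxE : x ∈ entriesOf S := subset_entriesOf hD hx
      rw [hEeq, hNval] at hxE
      have hxC0 : x ∈ C0 := by
        rw [hC0val]
        simp only [Finset.mem_insert, Finset.mem_singleton] at hxE ⊢
        tauto
      exact Finset.disjoint_left.mp hdisj hx hxC0
    rw [← hC0val]
    apply Finset.eq_singleton_iff_unique_mem.mpr
    exact ⟨hC0val ▸ hC0, fun D hD => hSsub D hD⟩
  · rintro rfl
    have hent : entriesOf {({1, 3} : Finset ℤ)} = ({1, 3} : Finset ℤ) := by
      simp [entriesOf]
    refine ⟨⟨?_, ?_⟩, ?_, ?_, ?_, ?_⟩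
    · intro C hC
      rw [Finset.mem_singleton] at hC
      exact isChainSet_iff.mpr ⟨3, 1, hC ▸ chain13⟩
    · intro C hC D hD hne
      rw [Finset.mem_singleton] at hC hD
      exact absurd (hC.trans hD.symm) hne
    · intro C hC D hD
      rw [Finset.mem_singleton] at hC hD
      rw [hC, hD]
    · rw [hent]
      decide
    · intro x hx
      rw [hent] at hx
      simp only [Finset.mem_insert, Finset.mem_singleton] at hx
      omega
    · rw [hent]
      decide

end Main


/-- **Corollary 3.10.** For every `n ≥ 2`, the set of admissible configurations of size `n`
is finite and has exactly `2 ^ (n - 2)` elements. -/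
theorem number_of_admissible_configurations (n : ℕ) (hn : 2 ≤ n) :
    {S : Finset (Finset ℤ) | AdmissibleConfig n S}.Finite ∧
    {S : Finset (Finset ℤ) | AdmissibleConfig n S}.ncard = 2 ^ (n - 2) := by
  induction n, hn using Nat.le_induction with
  | base =>
    rw [adm_two]
    exact ⟨Set.finite_singleton _, by simp⟩
  | succ n hn ih =>
    obtain ⟨hfin, hcard⟩ := ih
    set A : Set (Finset (Finset ℤ)) := {S | AdmissibleConfig n S} with hA
    have hunion : {S : Finset (Finset ℤ) | AdmissibleConfig (n + 1) S}
        = op0 '' A ∪ op1 '' A := by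
      ext S
      simp only [Set.mem_setOf_eq, Set.mem_union, Set.mem_image]
      constructor
      · intro h
        obtain ⟨T, hT, hST⟩ := adm_surj hn h
        rcases hST with h0 | h1
        · exact Or.inl ⟨T, hT, h0.symm⟩
        · exact Or.inr ⟨T, hT, h1.symm⟩
      · rintro (⟨T, hT, rfl⟩ | ⟨T, hT, rfl⟩)
        · exact (adm_op0 hn hT).1
        · exact (adm_op1 hn hT).1
    have hdisj : Disjoint (op0 '' A) (op1 '' A) := by
      rw [Set.disjoint_left]
      rintro X ⟨T, hT, rfl⟩ ⟨T', hT', heq⟩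
      have h0 := (adm_op0 hn hT).2.2
      have h1 := (adm_op1 hn hT').2.2
      rw [heq] at h1
      exact h0 h1
    have hinj0 : Set.InjOn op0 A := by
      intro T hT T' hT' heq
      have e1 := (adm_op0 hn hT).2.1
      rw [heq, (adm_op0 hn hT').2.1] at e1
      exact e1.symm
    have hinj1 : Set.InjOn op1 A := by
      intro T hT T' hT' heq
      have e1 := (adm_op1 hn hT).2.1
      rw [heq, (adm_op1 hn hT').2.1] at e1
      exact e1.symm
    refine ⟨hunion ▸ ((hfin.image op0).union (hfin.image op1)), ?_⟩
    rw [hunion, Set.ncard_union_eq hdisj (hfin.image op0) (hfin.image op1),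
      Set.ncard_image_of_injOn hinj0, Set.ncard_image_of_injOn hinj1, hcard]
    have : n + 1 - 2 = (n - 2) + 1 := by omega
    rw [this, pow_succ]
    ring
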